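/- Let Ũ, U ∈ ℝ^{d×r} have orthonormal columns, let Q ∈ ℝ^{d×r} with QQ^⊤ = UΛU^⊤ where Λ is diagonal positive definite with smallest entry λ_r² > 0, and let Ñ be a symmetric matrix whose top-r eigenvector matrix is Ũ. Then ‖ŨŨ^⊤ − UU^⊤‖_sp ≤ (4/λ_r²)·‖Ñ − QQ^⊤‖_sp, provided ‖Ñ − QQ^⊤‖_sp < λ_r²/2. -/

import Mathlib

open Matrix
open scoped Matrix.Norms.L2Operator

/-- Spectral (ℓ₂ operator) norm of a real matrix. -/
noncomputable def spNorm {m n : ℕ} (M : Matrix (Fin m) (Fin n) ℝ) : ℝ :=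
  ‖(Matrix.toEuclideanLin M).toContinuousLinearMap‖

namespace SPPaux

lemma spNorm_eq_norm {m n : ℕ} (M : Matrix (Fin m) (Fin n) ℝ) : spNorm M = ‖M‖ := rfl

lemma sum_embed {d k : ℕ} (h : k ≤ d) (f : Fin d → ℝ)
    (hf : ∀ i : Fin d, k ≤ (i : ℕ) → f i = 0) :
    ∑ i, f i = ∑ j : Fin k, f (Fin.castLE h j) := by
  have : ∑ j : Fin k, f (Fin.castLE h j) = ∑ i ∈ Finset.univ.map (Fin.castLEEmb h), f i := by
    rw [Finset.sum_map]; rfl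
  rw [this]
  refine (Finset.sum_subset (Finset.subset_univ _) ?_).symm
  intro i _ hi
  refine hf i ?_
  by_contra hlt
  push_neg at hlt
  exact hi (Finset.mem_map.mpr ⟨⟨(i : ℕ), hlt⟩, Finset.mem_univ _, by
    simp [Fin.castLEEmb, Fin.ext_iff]⟩)

lemma norm_diagonal_le {n : ℕ} (f : Fin n → ℝ) (c : ℝ) (hc : 0 ≤ c)
    (h : ∀ i, |f i| ≤ c) : ‖Matrix.diagonal f‖ ≤ c := by
  rw [Matrix.l2_opNorm_def]
  refine ContinuousLinearMap.opNorm_le_bound _ hc fun x => ?_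
  have hx : ∀ y : EuclideanSpace ℝ (Fin n), ‖y‖ = Real.sqrt (∑ i, (y i) ^ 2) := by
    intro y
    rw [EuclideanSpace.norm_eq]
    congr 1
    exact Finset.sum_congr rfl fun i _ => by rw [Real.norm_eq_abs, sq_abs]
  have happ : ∀ i, (LinearMap.toContinuousLinearMap (Matrix.toEuclideanLin (Matrix.diagonal f)) x) i
      = f i * x i := by
    intro i
    show (Matrix.toEuclideanLin (Matrix.diagonal f) x) i = f i * x i
    rw [Matrix.toEuclideanLin_apply]
    exact Matrix.mulVec_diagonal f _ i
  rw [hx, hx]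
  have h1 : ∑ i, ((LinearMap.toContinuousLinearMap (Matrix.toEuclideanLin (Matrix.diagonal f)) x) i) ^ 2
      ≤ c ^ 2 * ∑ i, (x i) ^ 2 := by
    rw [Finset.mul_sum]
    refine Finset.sum_le_sum fun i _ => ?_
    rw [happ i, mul_pow]
    have : (f i) ^ 2 ≤ c ^ 2 := by
      have := h i
      nlinarith [abs_nonneg (f i), sq_abs (f i), abs_le.mp (h i)]
    nlinarith [sq_nonneg (x i)]
  calc Real.sqrt (∑ i, _ ^ 2) ≤ Real.sqrt (c ^ 2 * ∑ i, (x i) ^ 2) := Real.sqrt_le_sqrt h1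
    _ = c * Real.sqrt (∑ i, (x i) ^ 2) := by
        rw [Real.sqrt_mul (sq_nonneg c), Real.sqrt_sq hc]

lemma conjT_eq_transpose {m n : ℕ} (A : Matrix (Fin m) (Fin n) ℝ) : Aᴴ = Aᵀ := by
  ext i j; simp [Matrix.conjTranspose_apply]

lemma norm_le_one_of_orthonormal {m n : ℕ} (A : Matrix (Fin m) (Fin n) ℝ)
    (h : Aᵀ * A = 1) : ‖A‖ ≤ 1 := by
  have h2 := Matrix.l2_opNorm_conjTranspose_mul_self A
  rw [conjT_eq_transpose, h] at h2
  have h3 : ‖(1 : Matrix (Fin n) (Fin n) ℝ)‖ ≤ 1 := by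
    rw [← Matrix.diagonal_one]
    exact norm_diagonal_le _ 1 zero_le_one fun i => by simp
  nlinarith [norm_nonneg A]

lemma norm_le_one_of_projection {n : ℕ} (S : Matrix (Fin n) (Fin n) ℝ)
    (h1 : Sᵀ = S) (h2 : S * S = S) : ‖S‖ ≤ 1 := by
  have := Matrix.l2_opNorm_conjTranspose_mul_self S
  rw [conjT_eq_transpose, h1, h2] at this
  nlinarith [norm_nonneg S]

lemma abs_quad_le {n : ℕ} (M : Matrix (Fin n) (Fin n) ℝ) (x : Fin n → ℝ) :
    |x ⬝ᵥ (M *ᵥ x)| ≤ ‖M‖ * ∑ i, (x i) ^ 2 := by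
  set x' : EuclideanSpace ℝ (Fin n) := (WithLp.equiv 2 (Fin n → ℝ)).symm x with hx'
  set y' : EuclideanSpace ℝ (Fin n) := (WithLp.equiv 2 (Fin n → ℝ)).symm (M *ᵥ x) with hy'
  have hnx : ‖x'‖ = Real.sqrt (∑ i, (x i) ^ 2) := by
    rw [EuclideanSpace.norm_eq]
    congr 1
    exact Finset.sum_congr rfl fun i _ => by
      rw [Real.norm_eq_abs, sq_abs]; rfl
  have hinner : (inner ℝ x' y' : ℝ) = x ⬝ᵥ (M *ᵥ x) := by
    rw [PiLp.inner_apply]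
    rw [hx', hy']; simp [dotProduct, mul_comm]
  have hcs : |(inner ℝ x' y' : ℝ)| ≤ ‖x'‖ * ‖y'‖ := abs_real_inner_le_norm x' y'
  have hmv : ‖y'‖ ≤ ‖M‖ * ‖x'‖ := Matrix.l2_opNorm_mulVec M x'
  have hs : (0:ℝ) ≤ ∑ i, (x i) ^ 2 := Finset.sum_nonneg fun i _ => sq_nonneg _
  calc |x ⬝ᵥ (M *ᵥ x)| = |(inner ℝ x' y' : ℝ)| := by rw [hinner]
    _ ≤ ‖x'‖ * ‖y'‖ := hcs
    _ ≤ ‖x'‖ * (‖M‖ * ‖x'‖) := by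
        have := norm_nonneg x'
        nlinarith [norm_nonneg y']
    _ = ‖M‖ * (‖x'‖ * ‖x'‖) := by ring
    _ = ‖M‖ * ∑ i, (x i) ^ 2 := by
        rw [hnx, Real.mul_self_sqrt hs]

lemma exists_ker {m n : ℕ} (h : m < n) (M : Matrix (Fin m) (Fin n) ℝ) :
    ∃ y : Fin n → ℝ, y ≠ 0 ∧ M *ᵥ y = 0 := by
  by_contra hc
  push_neg at hc
  have hinj : Function.Injective M.mulVecLin := by
    rw [← LinearMap.ker_eq_bot]
    refine (Submodule.eq_bot_iff _).mpr fun y hy => ?_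
    by_contra hy0
    exact hc y hy0 hy
  have := LinearMap.finrank_le_finrank_of_injective hinj
  rw [Module.finrank_fin_fun, Module.finrank_fin_fun] at this
  omega


lemma norm_transpose {m n : ℕ} (A : Matrix (Fin m) (Fin n) ℝ) : ‖Aᵀ‖ = ‖A‖ := by
  rw [← conjT_eq_transpose, Matrix.l2_opNorm_conjTranspose]

lemma norm_mul3_le {m n : ℕ} (A : Matrix (Fin m) (Fin n) ℝ) (B : Matrix (Fin n) (Fin n) ℝ)
    (C : Matrix (Fin n) (Fin m) ℝ) (hA : ‖A‖ ≤ 1) (hC : ‖C‖ ≤ 1) :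
    ‖A * B * C‖ ≤ ‖B‖ := by
  have h1 : ‖A * B * C‖ ≤ ‖A * B‖ * ‖C‖ := Matrix.l2_opNorm_mul _ _
  have h2 : ‖A * B‖ ≤ ‖A‖ * ‖B‖ := Matrix.l2_opNorm_mul _ _
  nlinarith [norm_nonneg (A * B), norm_nonneg A, norm_nonneg B, norm_nonneg C,
    norm_nonneg (A * B * C)]

lemma conj_cancel {n : ℕ} (Vm A : Matrix (Fin n) (Fin n) ℝ) (hV1 : Vmᵀ * Vm = 1) :
    Vmᵀ * (Vm * A * Vmᵀ) * Vm = A := by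
  simp only [← Matrix.mul_assoc]
  rw [hV1, Matrix.one_mul, Matrix.mul_assoc, hV1, Matrix.mul_one]

lemma conj_mul {n : ℕ} (Vm : Matrix (Fin n) (Fin n) ℝ) (hV1 : Vmᵀ * Vm = 1)
    (a b : Fin n → ℝ) :
    (Vm * Matrix.diagonal a * Vmᵀ) * (Vm * Matrix.diagonal b * Vmᵀ) =
      Vm * Matrix.diagonal (fun i => a i * b i) * Vmᵀ := by
  have key : Matrix.diagonal a * Matrix.diagonal b = Matrix.diagonal fun i => a i * b i :=
    Matrix.diagonal_mul_diagonal a b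
  calc (Vm * Matrix.diagonal a * Vmᵀ) * (Vm * Matrix.diagonal b * Vmᵀ)
      = Vm * Matrix.diagonal a * (Vmᵀ * Vm) * Matrix.diagonal b * Vmᵀ := by
        simp only [Matrix.mul_assoc]
    _ = Vm * (Matrix.diagonal a * Matrix.diagonal b) * Vmᵀ := by
        rw [hV1, Matrix.mul_one, Matrix.mul_assoc Vm]
    _ = Vm * Matrix.diagonal (fun i => a i * b i) * Vmᵀ := by rw [key]

lemma quad_diag {n : ℕ} (μ : Fin n → ℝ) (x : Fin n → ℝ) :
    x ⬝ᵥ (Matrix.diagonal μ *ᵥ x) = ∑ i, μ i * (x i) ^ 2 := by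
  simp only [dotProduct, Matrix.mulVec_diagonal]
  exact Finset.sum_congr rfl fun i _ => by ring

lemma dot_self_eq {n : ℕ} (x : Fin n → ℝ) : x ⬝ᵥ x = ∑ i, (x i) ^ 2 := by
  simp only [dotProduct]
  exact Finset.sum_congr rfl fun i _ => by ring

lemma quad_UDUt {d r : ℕ} (U' : Matrix (Fin d) (Fin r) ℝ) (Λ : Fin r → ℝ) (x : Fin d → ℝ) :
    x ⬝ᵥ ((U' * Matrix.diagonal Λ * U'ᵀ) *ᵥ x) = ∑ c, Λ c * ((U'ᵀ *ᵥ x) c) ^ 2 := by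
  rw [← Matrix.mulVec_mulVec, ← Matrix.mulVec_mulVec, Matrix.dotProduct_mulVec,
    ← Matrix.mulVec_transpose]
  exact quad_diag Λ (U'ᵀ *ᵥ x)

lemma sum_sq_pos {n : ℕ} (y : Fin n → ℝ) (hy : y ≠ 0) : 0 < ∑ i, (y i) ^ 2 := by
  obtain ⟨i, hi⟩ := Function.ne_iff.mp hy
  refine Finset.sum_pos' (fun j _ => sq_nonneg _) ⟨i, Finset.mem_univ i, ?_⟩
  have : y i ≠ 0 := hi
  positivity

end SPPaux

set_option maxHeartbeats 1000000 in
/-- Spectral projection perturbation: let `QQᵀ = U Λ Uᵀ` with `U` orthonormal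
and `Λ` diagonal with entries `≥ λ_r² > 0`, and let `Ñ = V diag(μ) Vᵀ` be a
spectral decomposition (`μ` antitone) with `Ũ` the matrix of the top `r`
eigenvectors (first `r` columns of `V`).  If `‖Ñ − QQᵀ‖_sp < λ_r²/2` then
`‖ŨŨᵀ − UUᵀ‖_sp ≤ (4/λ_r²)‖Ñ − QQᵀ‖_sp`. -/
theorem spectral_projection_perturbation {d r : ℕ} (hr : r ≤ d)
    (Q U : Matrix (Fin d) (Fin r) ℝ)
    (Λ : Fin r → ℝ) (lamr2 : ℝ) (hlam : 0 < lamr2)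
    (hΛ : ∀ i, lamr2 ≤ Λ i)
    (hU : U.transpose * U = 1)
    (hQ : Q * Q.transpose = U * Matrix.diagonal Λ * U.transpose)
    (Ntilde : Matrix (Fin d) (Fin d) ℝ)
    (V : Matrix.orthogonalGroup (Fin d) ℝ) (μ : Fin d → ℝ)
    (hμ : ∀ i j : Fin d, i ≤ j → μ j ≤ μ i)
    (hNtilde : Ntilde = (V : Matrix (Fin d) (Fin d) ℝ) * Matrix.diagonal μ *
      (V : Matrix (Fin d) (Fin d) ℝ).transpose)
    (Utilde : Matrix (Fin d) (Fin r) ℝ)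
    (hUtilde : Utilde = (V : Matrix (Fin d) (Fin d) ℝ).submatrix id (Fin.castLE hr))
    (hgap : spNorm (Ntilde - Q * Q.transpose) < lamr2 / 2) :
    spNorm (Utilde * Utilde.transpose - U * U.transpose) ≤
      (4 / lamr2) * spNorm (Ntilde - Q * Q.transpose) := by
  classical
  rw [SPPaux.spNorm_eq_norm] at hgap ⊢
  rw [SPPaux.spNorm_eq_norm]
  set Vm : Matrix (Fin d) (Fin d) ℝ := (V : Matrix (Fin d) (Fin d) ℝ) with hVm
  -- orthogonality of V
  have hVmem := V.2
  rw [Matrix.mem_orthogonalGroup_iff] at hVmem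
  have hV2 : Vm * Vmᵀ = 1 := by
    rw [← SPPaux.conjT_eq_transpose, ← Matrix.star_eq_conjTranspose]; exact hVmem
  have hVmem' := V.2
  rw [Matrix.mem_orthogonalGroup_iff'] at hVmem'
  have hV1 : Vmᵀ * Vm = 1 := by
    rw [← SPPaux.conjT_eq_transpose, ← Matrix.star_eq_conjTranspose]; exact hVmem'
  set N : Matrix (Fin d) (Fin d) ℝ := Q * Qᵀ with hN
  set E : Matrix (Fin d) (Fin d) ℝ := Ntilde - Q * Qᵀ with hEdef
  set ε : ℝ := ‖E‖ with hEps
  have hε : 0 ≤ ε := norm_nonneg _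
  -- rotated frame
  set U' : Matrix (Fin d) (Fin r) ℝ := Vmᵀ * U with hU'
  have hU'1 : U'ᵀ * U' = 1 := by
    rw [hU', Matrix.transpose_mul, Matrix.transpose_transpose, Matrix.mul_assoc,
      ← Matrix.mul_assoc Vm, hV2, Matrix.one_mul, hU]
  set N' : Matrix (Fin d) (Fin d) ℝ := U' * Matrix.diagonal Λ * U'ᵀ with hN'def
  have hNtoN' : Vmᵀ * N * Vm = N' := by
    rw [hQ, hN'def, hU', Matrix.transpose_mul, Matrix.transpose_transpose]
    simp only [Matrix.mul_assoc]
  set E' : Matrix (Fin d) (Fin d) ℝ := Matrix.diagonal μ - N' with hE'def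
  have hdiagmu : Vmᵀ * Ntilde * Vm = Matrix.diagonal μ := by
    rw [hNtilde]; exact SPPaux.conj_cancel Vm _ hV1
  have hE'eq : E' = Vmᵀ * E * Vm := by
    rw [hE'def, hEdef, Matrix.mul_sub, Matrix.sub_mul, hdiagmu, ← hN, hNtoN']
  have hVnorm : ‖Vm‖ ≤ 1 := SPPaux.norm_le_one_of_orthonormal Vm hV1
  have hVtnorm : ‖Vmᵀ‖ ≤ 1 := by rw [SPPaux.norm_transpose]; exact hVnorm
  have hE'norm : ‖E'‖ ≤ ε := by
    rw [hE'eq]; exact SPPaux.norm_mul3_le _ _ _ hVtnorm hVnorm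
  -- quadratic form decomposition
  have hsplit : ∀ x : Fin d → ℝ,
      x ⬝ᵥ (Matrix.diagonal μ *ᵥ x) = x ⬝ᵥ (N' *ᵥ x) + x ⬝ᵥ (E' *ᵥ x) := by
    intro x
    rw [hE'def, Matrix.sub_mulVec, dotProduct_sub]
    ring
  -- Claim C
  have hC : ∀ i : Fin d, -ε ≤ μ i := by
    intro i
    set x : Fin d → ℝ := Pi.single i 1 with hx
    have hqD : x ⬝ᵥ (Matrix.diagonal μ *ᵥ x) = μ i := by
      rw [SPPaux.quad_diag]
      have hterm : ∀ j : Fin d, μ j * (x j) ^ 2 = if j = i then μ j else 0 := by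
        intro j
        by_cases h : j = i <;> simp [hx, Pi.single_apply, h]
      rw [Finset.sum_congr rfl fun j _ => hterm j, Finset.sum_ite_eq' Finset.univ i μ]
      simp
    have hsum1 : ∑ j, (x j) ^ 2 = 1 := by
      have hterm : ∀ j : Fin d, (x j) ^ 2 = if j = i then 1 else 0 := by
        intro j
        by_cases h : j = i <;> simp [hx, Pi.single_apply, h]
      rw [Finset.sum_congr rfl fun j _ => hterm j,
        Finset.sum_ite_eq' Finset.univ i fun _ => (1 : ℝ)]
      simp
    have hqN : 0 ≤ x ⬝ᵥ (N' *ᵥ x) := by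
      rw [hN'def, SPPaux.quad_UDUt]
      exact Finset.sum_nonneg fun c _ => mul_nonneg (le_trans hlam.le (hΛ c)) (sq_nonneg _)
    have hqE : |x ⬝ᵥ (E' *ᵥ x)| ≤ ε := by
      have h1 := SPPaux.abs_quad_le E' x
      rw [hsum1, mul_one] at h1
      exact le_trans h1 hE'norm
    have hs := hsplit x
    rw [hqD] at hs
    have := (abs_le.mp hqE).1
    linarith
  -- Claim B
  have hB : ∀ i : Fin d, (i : ℕ) < r → lamr2 - ε ≤ μ i := by
    intro i hi
    have hkd : (i : ℕ) ≤ d := i.isLt.le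
    obtain ⟨y, hy0, hyker⟩ := SPPaux.exists_ker hi
      (U'.submatrix (fun j : Fin (i : ℕ) => Fin.castLE hkd j) id)
    set x : Fin d → ℝ := U' *ᵥ y with hx
    have hx0 : ∀ j : Fin d, (j : ℕ) < (i : ℕ) → x j = 0 := by
      intro j hj
      have h1 : x j =
          ((U'.submatrix (fun j : Fin (i : ℕ) => Fin.castLE hkd j) id) *ᵥ y) ⟨(j : ℕ), hj⟩ := rfl
      rw [h1, hyker]
      rfl
    have hUtx : U'ᵀ *ᵥ x = y := by
      rw [hx, Matrix.mulVec_mulVec, hU'1, Matrix.one_mulVec]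
    have hxx : ∑ j, (x j) ^ 2 = ∑ c, (y c) ^ 2 := by
      rw [← SPPaux.dot_self_eq, ← SPPaux.dot_self_eq, hx, Matrix.dotProduct_mulVec,
        ← Matrix.mulVec_transpose, Matrix.mulVec_mulVec, hU'1, Matrix.one_mulVec]
    have hqN : x ⬝ᵥ (N' *ᵥ x) = ∑ c, Λ c * (y c) ^ 2 := by
      rw [hN'def, SPPaux.quad_UDUt, hUtx]
    have hqNlb : lamr2 * ∑ c, (y c) ^ 2 ≤ x ⬝ᵥ (N' *ᵥ x) := by
      rw [hqN, Finset.mul_sum]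
      exact Finset.sum_le_sum fun c _ => mul_le_mul_of_nonneg_right (hΛ c) (sq_nonneg _)
    have hqD : x ⬝ᵥ (Matrix.diagonal μ *ᵥ x) ≤ μ i * ∑ j, (x j) ^ 2 := by
      rw [SPPaux.quad_diag, Finset.mul_sum]
      refine Finset.sum_le_sum fun j _ => ?_
      by_cases h : (j : ℕ) < (i : ℕ)
      · rw [hx0 j h]
        simp
      · push_neg at h
        exact mul_le_mul_of_nonneg_right (hμ i j (by rw [Fin.le_def]; omega)) (sq_nonneg _)
    have hqE : |x ⬝ᵥ (E' *ᵥ x)| ≤ ε * ∑ j, (x j) ^ 2 := by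
      refine le_trans (SPPaux.abs_quad_le E' x) ?_
      exact mul_le_mul_of_nonneg_right hE'norm (Finset.sum_nonneg fun j _ => sq_nonneg _)
    have hpos : 0 < ∑ c, (y c) ^ 2 := SPPaux.sum_sq_pos y hy0
    have hs := hsplit x
    have hE1 := (abs_le.mp hqE).1
    have hfinal : (lamr2 - ε) * (∑ c, (y c) ^ 2) ≤ μ i * (∑ c, (y c) ^ 2) := by
      rw [← hxx] at hpos ⊢
      nlinarith
    exact (mul_le_mul_iff_of_pos_right hpos).mp hfinal
  -- Claim A
  have hA : ∀ i : Fin d, r ≤ (i : ℕ) → μ i ≤ ε := by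
    intro i hi
    have hk : (i : ℕ) + 1 ≤ d := i.isLt
    have hrk : r < (i : ℕ) + 1 := Nat.lt_succ_of_le hi
    obtain ⟨z, hz0, hzker⟩ := SPPaux.exists_ker hrk (U'.submatrix (Fin.castLE hk) id)ᵀ
    set x : Fin d → ℝ :=
      (fun j : Fin d => if h : (j : ℕ) < (i : ℕ) + 1 then z ⟨(j : ℕ), h⟩ else 0) with hx
    have hx0 : ∀ j : Fin d, (i : ℕ) + 1 ≤ (j : ℕ) → x j = 0 := fun j hj => dif_neg (by omega)
    have hxc : ∀ c : Fin ((i : ℕ) + 1), x (Fin.castLE hk c) = z c := fun c => dif_pos c.isLt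
    have hUtx : U'ᵀ *ᵥ x = 0 := by
      funext c
      have h1 : (U'ᵀ *ᵥ x) c = ∑ j, U' j c * x j := by
        simp [Matrix.mulVec, dotProduct, Matrix.transpose_apply]
      rw [h1, SPPaux.sum_embed hk (fun j => U' j c * x j)
        (fun j hj => by show U' j c * x j = 0; rw [hx0 j hj]; ring)]
      have h2 : ∀ c2 : Fin ((i : ℕ) + 1),
          U' (Fin.castLE hk c2) c * x (Fin.castLE hk c2) =
            (U'.submatrix (Fin.castLE hk) id)ᵀ c c2 * z c2 := by
        intro c2
        rw [hxc]
        rfl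
      rw [Finset.sum_congr rfl fun c2 _ => h2 c2]
      have h3 := congrFun hzker c
      simpa [Matrix.mulVec, dotProduct] using h3
    have hqN : x ⬝ᵥ (N' *ᵥ x) = 0 := by
      rw [hN'def, SPPaux.quad_UDUt, hUtx]
      simp
    have hxsum : ∑ j, (x j) ^ 2 = ∑ c, (z c) ^ 2 := by
      rw [SPPaux.sum_embed hk (fun j => (x j) ^ 2)
        (fun j hj => by show (x j) ^ 2 = 0; rw [hx0 j hj]; ring)]
      exact Finset.sum_congr rfl fun c _ => by rw [hxc]
    have hpos : 0 < ∑ c, (z c) ^ 2 := SPPaux.sum_sq_pos z hz0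
    have hqD : μ i * ∑ j, (x j) ^ 2 ≤ x ⬝ᵥ (Matrix.diagonal μ *ᵥ x) := by
      rw [SPPaux.quad_diag, Finset.mul_sum]
      refine Finset.sum_le_sum fun j _ => ?_
      by_cases h : (j : ℕ) < (i : ℕ) + 1
      · exact mul_le_mul_of_nonneg_right (hμ j i (by rw [Fin.le_def]; omega)) (sq_nonneg _)
      · rw [hx0 j (by omega)]
        simp
    have hqE : |x ⬝ᵥ (E' *ᵥ x)| ≤ ε * ∑ j, (x j) ^ 2 := by
      refine le_trans (SPPaux.abs_quad_le E' x) ?_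
      exact mul_le_mul_of_nonneg_right hE'norm (Finset.sum_nonneg fun j _ => sq_nonneg _)
    have hs := hsplit x
    have hE2 := (abs_le.mp hqE).2
    have hfinal : μ i * (∑ c, (z c) ^ 2) ≤ ε * (∑ c, (z c) ^ 2) := by
      rw [← hxsum] at hpos ⊢
      nlinarith
    exact (mul_le_mul_iff_of_pos_right hpos).mp hfinal
  -- main chain
  set ind : Fin d → ℝ := fun i => if (i : ℕ) < r then 1 else 0 with hind
  set g : Fin d → ℝ := fun i => if (i : ℕ) < r then (μ i)⁻¹ else 0 with hg
  set μ' : Fin d → ℝ := fun i => if (i : ℕ) < r then 0 else μ i with hmu'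
  set P : Matrix (Fin d) (Fin d) ℝ := U * Uᵀ with hP
  set Pt : Matrix (Fin d) (Fin d) ℝ := Utilde * Utildeᵀ with hPtdef
  set G : Matrix (Fin d) (Fin d) ℝ := Vm * Matrix.diagonal g * Vmᵀ with hG
  -- Pt as a V-conjugated diagonal
  have hPt : Pt = Vm * Matrix.diagonal ind * Vmᵀ := by
    rw [hPtdef, hUtilde]
    ext a b
    have hrhs : (Vm * Matrix.diagonal ind * Vmᵀ) a b = ∑ k, Vm a k * (ind k * Vm b k) := by
      rw [Matrix.mul_assoc, Matrix.mul_apply]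
      exact Finset.sum_congr rfl fun k _ => by rw [Matrix.diagonal_mul]; rfl
    rw [hrhs, SPPaux.sum_embed hr (fun k => Vm a k * (ind k * Vm b k))
      (fun k hk => by
        show Vm a k * (ind k * Vm b k) = 0
        rw [hind]
        simp [Nat.not_lt.mpr hk])]
    rw [Matrix.mul_apply]
    refine Finset.sum_congr rfl fun c _ => ?_
    have hc : ((Fin.castLE hr c : Fin d) : ℕ) < r := c.isLt
    show Vm a (Fin.castLE hr c) * Vm b (Fin.castLE hr c) = _
    rw [hind]
    simp [hc]
  have hdiagsub : Matrix.diagonal (fun i => 1 - ind i) = 1 - Matrix.diagonal ind := by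
    ext a b
    by_cases h : a = b <;> simp [Matrix.diagonal, Matrix.one_apply, h]
  have h1mPt : 1 - Pt = Vm * Matrix.diagonal (fun i => 1 - ind i) * Vmᵀ := by
    rw [hdiagsub, Matrix.mul_sub, Matrix.sub_mul, Matrix.mul_one, hV2, hPt]
  set R : Matrix (Fin d) (Fin d) ℝ := U * Matrix.diagonal (fun c => (Λ c)⁻¹) * Uᵀ with hR
  have hNR : N * R = P := by
    rw [hQ, hR, hP]
    calc U * Matrix.diagonal Λ * Uᵀ * (U * Matrix.diagonal (fun c => (Λ c)⁻¹) * Uᵀ)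
        = U * (Matrix.diagonal Λ * ((Uᵀ * U) * (Matrix.diagonal (fun c => (Λ c)⁻¹) * Uᵀ))) := by
          simp only [Matrix.mul_assoc]
      _ = U * ((Matrix.diagonal Λ * Matrix.diagonal (fun c => (Λ c)⁻¹)) * Uᵀ) := by
          rw [hU, Matrix.one_mul, Matrix.mul_assoc]
      _ = U * Uᵀ := by
          rw [Matrix.diagonal_mul_diagonal,
            show (fun c => Λ c * (Λ c)⁻¹) = fun _ => (1 : ℝ) from
              funext fun c => mul_inv_cancel₀ (ne_of_gt (lt_of_lt_of_le hlam (hΛ c))),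
            Matrix.diagonal_one, Matrix.one_mul]
  have hPP : P * P = P := by
    rw [hP]
    calc U * Uᵀ * (U * Uᵀ) = U * ((Uᵀ * U) * Uᵀ) := by simp only [Matrix.mul_assoc]
      _ = U * Uᵀ := by rw [hU, Matrix.one_mul]
  have hNP : N * P = N := by
    rw [hQ, hP]
    calc U * Matrix.diagonal Λ * Uᵀ * (U * Uᵀ)
        = U * Matrix.diagonal Λ * ((Uᵀ * U) * Uᵀ) := by simp only [Matrix.mul_assoc]
      _ = U * Matrix.diagonal Λ * Uᵀ := by rw [hU, Matrix.one_mul]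
  have hNperp : N * (1 - P) = 0 := by
    rw [Matrix.mul_sub, Matrix.mul_one, hNP, sub_self]
  have hPperp : P * (1 - P) = 0 := by
    rw [Matrix.mul_sub, Matrix.mul_one, hPP, sub_self]
  have h1mPtN : (1 - Pt) * Ntilde = Vm * Matrix.diagonal μ' * Vmᵀ := by
    rw [h1mPt, hNtilde, SPPaux.conj_mul Vm hV1]
    have hfun : (fun i => (1 - ind i) * μ i) = μ' := by
      funext i
      rw [hind, hmu']
      by_cases h : (i : ℕ) < r <;> simp [h]
    rw [hfun]
  have hPtEq : G * Ntilde = Pt := by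
    rw [hG, hNtilde, SPPaux.conj_mul Vm hV1, hPt]
    have hfun : (fun i => g i * μ i) = ind := by
      funext i
      rw [hg, hind]
      by_cases h : (i : ℕ) < r
      · have hmupos : 0 < μ i := by
          have := hB i h
          linarith [hgap, hlam]
        simp [h, inv_mul_cancel₀ (ne_of_gt hmupos)]
      · simp [h]
    rw [hfun]
  -- norm bounds
  have hUnorm : ‖U‖ ≤ 1 := SPPaux.norm_le_one_of_orthonormal U hU
  have hUtnorm : ‖Uᵀ‖ ≤ 1 := by rw [SPPaux.norm_transpose]; exact hUnorm
  have hRnorm : ‖R‖ ≤ lamr2⁻¹ := by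
    refine le_trans (SPPaux.norm_mul3_le U _ Uᵀ hUnorm hUtnorm) ?_
    refine SPPaux.norm_diagonal_le _ _ (inv_nonneg.mpr hlam.le) fun c => ?_
    have h1 : 0 < Λ c := lt_of_lt_of_le hlam (hΛ c)
    rw [abs_of_pos (inv_pos.mpr h1)]
    exact inv_anti₀ hlam (hΛ c)
  have hmu'norm : ‖Vm * Matrix.diagonal μ' * Vmᵀ‖ ≤ ε := by
    refine le_trans (SPPaux.norm_mul3_le _ _ _ hVnorm hVtnorm) ?_
    refine SPPaux.norm_diagonal_le _ _ hε fun i => ?_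
    rw [hmu']
    by_cases h : (i : ℕ) < r
    · simp [h, hε]
    · push_neg at h
      simp only [if_neg (Nat.not_lt.mpr h)]
      exact abs_le.mpr ⟨hC i, hA i h⟩
  have h1mPtnorm : ‖1 - Pt‖ ≤ 1 := by
    rw [h1mPt]
    refine le_trans (SPPaux.norm_mul3_le _ _ _ hVnorm hVtnorm) ?_
    refine SPPaux.norm_diagonal_le _ 1 zero_le_one fun i => ?_
    rw [hind]
    by_cases h : (i : ℕ) < r <;> simp [h]
  have hGnorm : ‖G‖ ≤ 2 / lamr2 := by
    rw [hG]
    refine le_trans (SPPaux.norm_mul3_le _ _ _ hVnorm hVtnorm) ?_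
    refine SPPaux.norm_diagonal_le _ _ (by positivity) fun i => ?_
    rw [hg]
    by_cases h : (i : ℕ) < r
    · have hmulb : lamr2 / 2 ≤ μ i := by
        have := hB i h
        linarith [hgap]
      have hmupos : 0 < μ i := lt_of_lt_of_le (by positivity) hmulb
      simp only [if_pos h]
      rw [abs_of_pos (inv_pos.mpr hmupos)]
      calc (μ i)⁻¹ ≤ (lamr2 / 2)⁻¹ := inv_anti₀ (by positivity) hmulb
        _ = 2 / lamr2 := by rw [inv_div]
    · simp only [if_neg h, abs_zero]
      positivity
  have h1mPnorm : ‖1 - P‖ ≤ 1 := by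
    refine SPPaux.norm_le_one_of_projection _ ?_ ?_
    · rw [Matrix.transpose_sub, Matrix.transpose_one, hP, Matrix.transpose_mul,
        Matrix.transpose_transpose]
    · rw [Matrix.sub_mul, Matrix.one_mul, Matrix.mul_sub, Matrix.mul_one, hPP]
      abel
  -- term 1
  have hT1 : (Pt - P) * P = -((1 - Pt) * P) := by
    rw [Matrix.sub_mul, Matrix.sub_mul, Matrix.one_mul, hPP]
    abel
  have hT1norm : ‖(Pt - P) * P‖ ≤ 2 * ε * lamr2⁻¹ := by
    rw [hT1, norm_neg]
    have hNtE : Ntilde - E = N := by rw [hEdef, ← hN]; abel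
    have hdecomp : (1 - Pt) * P = ((1 - Pt) * Ntilde - (1 - Pt) * E) * R := by
      rw [← Matrix.mul_sub, hNtE, Matrix.mul_assoc, hNR]
    rw [hdecomp]
    have hs1 : ‖(1 - Pt) * Ntilde‖ ≤ ε := by rw [h1mPtN]; exact hmu'norm
    have hs2 : ‖(1 - Pt) * E‖ ≤ ε := by
      have := Matrix.l2_opNorm_mul (1 - Pt) E
      nlinarith [norm_nonneg E, norm_nonneg (1 - Pt)]
    have hs3 : ‖(1 - Pt) * Ntilde - (1 - Pt) * E‖ ≤ ε + ε :=
      le_trans (norm_sub_le _ _) (add_le_add hs1 hs2)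
    have hs4 := Matrix.l2_opNorm_mul ((1 - Pt) * Ntilde - (1 - Pt) * E) R
    have hs5 : (0:ℝ) ≤ ‖R‖ := norm_nonneg R
    have hs6 : (0:ℝ) ≤ lamr2⁻¹ := by positivity
    nlinarith [norm_nonneg ((1 - Pt) * Ntilde - (1 - Pt) * E)]
  -- term 2
  have hT2 : (Pt - P) * (1 - P) = G * E * (1 - P) := by
    rw [Matrix.sub_mul, hPperp, sub_zero, ← hPtEq]
    have hNtEadd : Ntilde = N + E := by rw [hEdef, ← hN]; abel
    rw [hNtEadd, Matrix.mul_add, Matrix.add_mul, Matrix.mul_assoc G N (1 - P), hNperp,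
      Matrix.mul_zero, zero_add]
  have hT2norm : ‖(Pt - P) * (1 - P)‖ ≤ 2 / lamr2 * ε := by
    rw [hT2]
    have h1 := Matrix.l2_opNorm_mul (G * E) (1 - P)
    have h2 := Matrix.l2_opNorm_mul G E
    have h3 : (0:ℝ) ≤ 2 / lamr2 := by positivity
    nlinarith [norm_nonneg (G * E), norm_nonneg G, norm_nonneg E, norm_nonneg (1 - P),
      norm_nonneg ((G * E) * (1 - P))]
  -- combine
  have hsplitA : Pt - P = (Pt - P) * P + (Pt - P) * (1 - P) := by
    rw [← Matrix.mul_add]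
    simp
  calc ‖Pt - P‖ = ‖(Pt - P) * P + (Pt - P) * (1 - P)‖ := by rw [← hsplitA]
    _ ≤ ‖(Pt - P) * P‖ + ‖(Pt - P) * (1 - P)‖ := norm_add_le _ _
    _ ≤ 2 * ε * lamr2⁻¹ + 2 / lamr2 * ε := add_le_add hT1norm hT2norm
    _ = 4 / lamr2 * ε := by
        field_simp
        ring
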